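/- Let G be a (second countable) topological group with a right-invariant Borel measure μ, and let Λ₁, Λ₂ ⊂ G be Borel sets of finite measure. Let f : G → 𝔥 be a bounded weakly measurable function into a Hilbert space 𝔥 such that (g,h) ↦ ⟨f(g), f(h)⟩ is Borel measurable. Then ‖∫_{Λ₂} ∫_{Λ₁} f(gh) dh dg‖² ≤ μ(Λ₂) · ∫_{Λ₁} ∫_{Λ₁} ∫_{Λ₂} ⟨f(g h₁), f(g h₂)⟩ dg dh₁ dh₂ (in particular all these iterated integrals exist). -/

import Mathlib

open MeasureTheory
open scoped ENNReal RealInnerProductSpace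

private lemma integrable_of_bound' {α E : Type*} [MeasurableSpace α] [NormedAddCommGroup E]
    (ν : Measure α) [IsFiniteMeasure ν] {φ : α → E} (hφ : AEStronglyMeasurable φ ν)
    (C : ℝ) (h : ∀ x, ‖φ x‖ ≤ C) : Integrable φ ν := by
  have : MemLp φ 1 ν := MemLp.of_bound hφ C (Filter.Eventually.of_forall h)
  exact this.integrable le_rfl

/-- Cauchy–Schwarz for a Bochner integral against a finite measure. -/
private lemma sq_norm_integral_le {α E : Type*} [MeasurableSpace α] [NormedAddCommGroup E]
    [NormedSpace ℝ E] (ν : Measure α) [IsFiniteMeasure ν] {φ : α → E}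
    (hφ : AEStronglyMeasurable φ ν) (C : ℝ) (hC : ∀ x, ‖φ x‖ ≤ C) :
    ‖∫ x, φ x ∂ν‖ ^ 2 ≤ (ν Set.univ).toReal * ∫ x, ‖φ x‖ ^ 2 ∂ν := by
  have hint : Integrable φ ν := integrable_of_bound' ν hφ C hC
  have hn2 : MemLp (fun x => ‖φ x‖) (ENNReal.ofReal 2) ν :=
    MemLp.of_bound hφ.norm C (Filter.Eventually.of_forall fun x => by
      simpa using hC x)
  have hone : MemLp (fun _ : α => (1 : ℝ)) (ENNReal.ofReal 2) ν := memLp_const 1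
  have hconj : Real.HolderConjugate 2 2 := Real.HolderConjugate.two_two
  have hcs := integral_mul_le_Lp_mul_Lq_of_nonneg hconj
    (Filter.Eventually.of_forall fun _ => zero_le_one)
    (Filter.Eventually.of_forall fun x => norm_nonneg (φ x)) hone hn2
  simp only [one_mul] at hcs
  set A : ℝ := (ν Set.univ).toReal with hA
  set B : ℝ := ∫ x, ‖φ x‖ ^ 2 ∂ν with hB
  have hA0 : 0 ≤ A := ENNReal.toReal_nonneg
  have hB0 : 0 ≤ B := integral_nonneg fun x => sq_nonneg _
  have hint1 : (∫ _ : α, (1 : ℝ) ^ (2 : ℝ) ∂ν) = A := by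
    simp [hA, Measure.real]
  have hint2 : (∫ x, ‖φ x‖ ^ (2 : ℝ) ∂ν) = B := by
    rw [hB]
    refine integral_congr_ae (Filter.Eventually.of_forall fun x => ?_)
    dsimp only
    rw [show ((2 : ℝ)) = ((2 : ℕ) : ℝ) by norm_num, Real.rpow_natCast]
  rw [hint1, hint2] at hcs
  have h1 : ‖∫ x, φ x ∂ν‖ ≤ ∫ x, ‖φ x‖ ∂ν := norm_integral_le_integral_norm _
  have h2 : ‖∫ x, φ x ∂ν‖ ^ 2 ≤ (A ^ (1 / 2 : ℝ) * B ^ (1 / 2 : ℝ)) ^ 2 :=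
    pow_le_pow_left₀ (norm_nonneg _) (h1.trans hcs) 2
  refine h2.trans (le_of_eq ?_)
  rw [mul_pow, ← Real.rpow_natCast (A ^ (1 / 2 : ℝ)) 2, ← Real.rpow_natCast (B ^ (1 / 2 : ℝ)) 2,
    ← Real.rpow_mul hA0, ← Real.rpow_mul hB0]
  norm_num

/-- Proposition 2.4: for a bounded measurable Hilbert-space-valued function on a
topological group with right invariant measure,
`‖∫_{Λ₂} ∫_{Λ₁} f(gh) dh dg‖² ≤ μ(Λ₂) ∫_{Λ₁}∫_{Λ₁}∫_{Λ₂} ⟪f(gh₁), f(gh₂)⟫ dg dh₁ dh₂`. -/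
theorem norm_double_integral_sq_le
    {G : Type*} [TopologicalSpace G] [Group G] [IsTopologicalGroup G]
    [SecondCountableTopology G] [MeasurableSpace G] [BorelSpace G]
    (μ : Measure G) [μ.IsMulRightInvariant]
    {H : Type*} [NormedAddCommGroup H] [InnerProductSpace ℝ H] [CompleteSpace H]
    (Λ₁ Λ₂ : Set G) (hΛ₁ : MeasurableSet Λ₁) (hΛ₂ : MeasurableSet Λ₂)
    (hμ₁ : μ Λ₁ < ⊤) (hμ₂ : μ Λ₂ < ⊤)
    (f : G → H) (hf : StronglyMeasurable f) (C : ℝ) (hC : ∀ g, ‖f g‖ ≤ C)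
    (hF : Measurable fun p : G × G => ⟪f p.1, f p.2⟫) :
    ‖∫ g in Λ₂, ∫ h in Λ₁, f (g * h) ∂μ ∂μ‖ ^ 2
      ≤ (μ Λ₂).toReal *
        ∫ h₂ in Λ₁, ∫ h₁ in Λ₁, ∫ g in Λ₂, ⟪f (g * h₁), f (g * h₂)⟫ ∂μ ∂μ ∂μ := by
  have hC0 : 0 ≤ C := le_trans (norm_nonneg _) (hC 1)
  set μ₁ := μ.restrict Λ₁ with hμ₁def
  set μ₂ := μ.restrict Λ₂ with hμ₂def
  haveI i1 : IsFiniteMeasure μ₁ := ⟨by rwa [Measure.restrict_apply_univ]⟩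
  haveI i2 : IsFiniteMeasure μ₂ := ⟨by rwa [Measure.restrict_apply_univ]⟩
  -- boundedness of the kernel
  have hK : ∀ a b : G, ‖⟪f a, f b⟫‖ ≤ C * C := fun a b => by
    rw [Real.norm_eq_abs]
    exact (abs_real_inner_le_norm _ _).trans
      (mul_le_mul (hC _) (hC _) (norm_nonneg _) hC0)
  -- the inner integral
  set F : G → H := fun g => ∫ h, f (g * h) ∂μ₁ with hFdef
  have hintf : ∀ g : G, Integrable (fun h => f (g * h)) μ₁ := fun g =>
    integrable_of_bound' μ₁
      ((hf.comp_measurable (measurable_const_mul g)).aestronglyMeasurable) C fun h => hC _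
  have hFsm : StronglyMeasurable F :=
    (hf.comp_measurable measurable_mul).integral_prod_right'
  have hFbdd : ∀ g, ‖F g‖ ≤ C * (μ Λ₁).toReal := fun g => by
    have := norm_integral_le_of_norm_le_const
      (μ := μ₁) (f := fun h => f (g * h)) (C := C) (Filter.Eventually.of_forall fun h => hC _)
    rwa [Measure.real, Measure.restrict_apply_univ] at this
  -- Step 1: Cauchy–Schwarz
  have step1 : ‖∫ g, F g ∂μ₂‖ ^ 2 ≤ (μ Λ₂).toReal * ∫ g, ‖F g‖ ^ 2 ∂μ₂ := by
    have := sq_norm_integral_le μ₂ hFsm.aestronglyMeasurable (C * (μ Λ₁).toReal) hFbdd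
    rwa [Measure.restrict_apply_univ] at this
  -- Step 2: pointwise identity ‖F g‖² = ∫∫ ⟪f(gh₁), f(gh₂)⟫
  have step2 : ∀ g, ‖F g‖ ^ 2 = ∫ h₂, ∫ h₁, ⟪f (g * h₁), f (g * h₂)⟫ ∂μ₁ ∂μ₁ := by
    intro g
    rw [← real_inner_self_eq_norm_sq]
    calc ⟪F g, F g⟫ = ∫ h₂, ⟪F g, f (g * h₂)⟫ ∂μ₁ := (integral_inner (hintf g) (F g)).symm
      _ = ∫ h₂, ∫ h₁, ⟪f (g * h₁), f (g * h₂)⟫ ∂μ₁ ∂μ₁ := by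
          refine integral_congr_ae (Filter.Eventually.of_forall fun h₂ => ?_)
          dsimp only
          rw [real_inner_comm, ← integral_inner (hintf g) (f (g * h₂))]
          exact integral_congr_ae (Filter.Eventually.of_forall fun h₁ => real_inner_comm _ _)
  -- Step 3: Fubini
  have hKm3 : Measurable fun p : G × G × G => ⟪f (p.1 * p.2.1), f (p.1 * p.2.2)⟫ :=
    hF.comp ((measurable_fst.mul measurable_snd.fst).prodMk
      (measurable_fst.mul measurable_snd.snd))
  have step3 : ∫ g, ∫ h₂, ∫ h₁, ⟪f (g * h₁), f (g * h₂)⟫ ∂μ₁ ∂μ₁ ∂μ₂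
      = ∫ h₂, ∫ h₁, ∫ g, ⟪f (g * h₁), f (g * h₂)⟫ ∂μ₂ ∂μ₁ ∂μ₁ := by
    -- first swap g and h₂
    have hmeas1 : StronglyMeasurable
        (fun p : (G × G) × G => ⟪f (p.1.1 * p.2), f (p.1.1 * p.1.2)⟫) :=
      (hF.comp ((measurable_fst.fst.mul measurable_snd).prodMk
        (measurable_fst.fst.mul measurable_fst.snd))).stronglyMeasurable
    have h1 : Integrable (Function.uncurry fun g h₂ => ∫ h₁, ⟪f (g * h₁), f (g * h₂)⟫ ∂μ₁)
        (μ₂.prod μ₁) := by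
      refine integrable_of_bound' _ hmeas1.integral_prod_right'.aestronglyMeasurable
        (C * C * (μ Λ₁).toReal) fun p => ?_
      have := norm_integral_le_of_norm_le_const (μ := μ₁)
        (f := fun h₁ => ⟪f (p.1 * h₁), f (p.1 * p.2)⟫) (C := C * C)
        (Filter.Eventually.of_forall fun h₁ => hK _ _)
      rwa [Measure.real, Measure.restrict_apply_univ] at this
    rw [integral_integral_swap h1]
    refine integral_congr_ae (Filter.Eventually.of_forall fun h₂ => ?_)
    -- swap g and h₁
    have h2 : Integrable (Function.uncurry fun g h₁ => ⟪f (g * h₁), f (g * h₂)⟫)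
        (μ₂.prod μ₁) := by
      refine integrable_of_bound' _ ?_ (C * C) fun p => hK _ _
      exact (hF.comp ((measurable_fst.mul measurable_snd).prodMk
        ((measurable_fst.mul measurable_const)))).aestronglyMeasurable
    exact integral_integral_swap h2
  calc ‖∫ g, F g ∂μ₂‖ ^ 2 ≤ (μ Λ₂).toReal * ∫ g, ‖F g‖ ^ 2 ∂μ₂ := step1
    _ = (μ Λ₂).toReal * ∫ h₂, ∫ h₁, ∫ g, ⟪f (g * h₁), f (g * h₂)⟫ ∂μ₂ ∂μ₁ ∂μ₁ := by
        rw [← step3]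
        congr 1
        exact integral_congr_ae (Filter.Eventually.of_forall step2)
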